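/- Let k be a field, R = k[x₁,…,xₙ], I ⊆ m = ⟨x₁,…,xₙ⟩ a monomial ideal with dim_k(R/I) < ∞, and M = R/I. Then the submodule generated by the envelope of 0, ⟨E_M(0)⟩ where E_M(0) = {r·m : r ∈ R, m ∈ M, rᵏm = 0 for some k ≥ 1}, equals m·M = m/I; consequently ⟨E_M(0)⟩ equals the prime radical β(M) and the Jacobson radical J(M), so the zero submodule of M satisfies the radical formula. -/

import Mathlib

open MvPolynomial Pointwise

/-- `I` is a monomial ideal of `k[x₁,…,xₙ]`. -/
def IsMonomialIdeal {k : Type*} [Field k] {n : ℕ}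
    (I : Ideal (MvPolynomial (Fin n) k)) : Prop :=
  ∃ S : Set (Fin n →₀ ℕ), I = Ideal.span ((fun d => monomial d (1 : k)) '' S)

section Aux

variable {k : Type*} [Field k] {n : ℕ}

/-- Subtracting the constant coefficient lands in `⟨x₁,…,xₙ⟩`. -/
lemma sub_C_mem_spanX (p : MvPolynomial (Fin n) k) :
    p - C (constantCoeff p) ∈ Ideal.span (Set.range X) := by
  induction p using MvPolynomial.induction_on with
  | C a => simp
  | add p q hp hq =>
      have h := Ideal.add_mem _ hp hq
      rw [map_add, map_add]
      convert h using 1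
      ring
  | mul_X p i hp =>
      have : constantCoeff (p * X i) = 0 := by simp
      rw [this, map_zero, sub_zero]
      exact Ideal.mul_mem_left _ p (Ideal.subset_span ⟨i, rfl⟩)

lemma mem_spanX_iff (p : MvPolynomial (Fin n) k) :
    p ∈ Ideal.span (Set.range X) ↔ constantCoeff p = 0 := by
  constructor
  · intro hp
    refine Submodule.span_induction ?_ ?_ ?_ ?_ hp
    · rintro x ⟨i, rfl⟩; simp
    · simp
    · intro a b _ _ ha hb; simp [ha, hb]
    · intro r a _ ha; simp [smul_eq_mul, ha]
  · intro h
    have := sub_C_mem_spanX p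
    rwa [h, map_zero, sub_zero] at this

/-- In a monomial ideal, every monomial of a member lies in the ideal. -/
lemma monomial_mem_of_mem {S : Set (Fin n →₀ ℕ)}
    {p : MvPolynomial (Fin n) k}
    (hp : p ∈ Ideal.span ((fun d => monomial d (1 : k)) '' S))
    {d : Fin n →₀ ℕ} (hd : d ∈ p.support) :
    monomial d (1 : k) ∈ Ideal.span ((fun d => monomial d (1 : k)) '' S) := by
  classical
  set I := Ideal.span ((fun d => monomial d (1 : k)) '' S) with hIdef
  have main : ∀ q ∈ I, ∀ e ∈ MvPolynomial.support q, monomial e (1 : k) ∈ I := by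
    intro q hq
    refine Submodule.span_induction ?_ ?_ ?_ ?_ hq
    · rintro x ⟨s, hs, rfl⟩ e he
      rw [support_monomial, if_neg one_ne_zero, Finset.mem_singleton] at he
      subst he
      exact Ideal.subset_span ⟨_, hs, rfl⟩
    · intro e he; simp at he
    · intro a b _ _ ha hb e he
      rcases Finset.mem_union.mp (MvPolynomial.support_add he) with h | h
      · exact ha e h
      · exact hb e h
    · intro r a _ ha e he
      have h2 : e ∈ r.support + a.support := MvPolynomial.support_mul r a he
      rcases Finset.mem_add.mp h2 with ⟨u, hu, v, hv, rfl⟩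
      have h1 : monomial v (1 : k) ∈ I := ha v hv
      have h3 : monomial u (1 : k) * monomial v (1 : k) ∈ I :=
        Ideal.mul_mem_left _ _ h1
      rwa [monomial_mul, one_mul] at h3
  exact main p hp d hd

/-- Each variable has a power lying in `I`. -/
lemma exists_pow_X_mem (I : Ideal (MvPolynomial (Fin n) k)) (hI : IsMonomialIdeal I)
    (hIm : I ≤ Ideal.span (Set.range X))
    [FiniteDimensional k (MvPolynomial (Fin n) k ⧸ I)] (i : Fin n) :
    ∃ d : ℕ, 1 ≤ d ∧ X i ^ d ∈ I := by
  obtain ⟨S, rfl⟩ := hI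
  set I := Ideal.span ((fun d => monomial d (1 : k)) '' S) with hIdef
  -- powers of X i are not linearly independent mod I
  have hnli : ¬ LinearIndependent k
      (fun j : ℕ => Ideal.Quotient.mk I (X i ^ j)) :=
    Module.Finite.not_linearIndependent_of_infinite _
  rw [not_linearIndependent_iff] at hnli
  obtain ⟨s, g, hsum, j₀, hj₀s, hj₀⟩ := hnli
  -- the polynomial p is in I
  set p : MvPolynomial (Fin n) k := ∑ j ∈ s, g j • X i ^ j with hpdef
  have hpI : p ∈ I := by
    rw [← Ideal.Quotient.eq_zero_iff_mem]
    rw [hpdef, map_sum]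
    have e : ∀ j, Ideal.Quotient.mk I (g j • X i ^ j) = g j • Ideal.Quotient.mk I (X i) ^ j :=
      fun j => by rw [← map_pow, ← Ideal.Quotient.mkₐ_eq_mk k, map_smul]
    rw [Finset.sum_congr rfl fun j _ => e j]
    simpa using hsum
  -- coefficient of `single i j₀` in p is g j₀
  have hX : ∀ j : ℕ, (X i : MvPolynomial (Fin n) k) ^ j
      = monomial (Finsupp.single i j) (1 : k) := by
    intro j; rw [X_pow_eq_monomial]
  have hcoeff : coeff (Finsupp.single i j₀) p = g j₀ := by
    rw [hpdef, coeff_sum]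
    have : ∀ j ∈ s, coeff (Finsupp.single i j₀) (g j • X i ^ j)
        = if j = j₀ then g j else 0 := by
      intro j _
      rw [hX j, coeff_smul, coeff_monomial]
      by_cases h : j = j₀
      · subst h; simp
      · have : Finsupp.single i j ≠ Finsupp.single i j₀ := by
          intro hc
          exact h (by simpa using congrArg (fun f => f i) hc)
        simp [this, h]
    rw [Finset.sum_congr rfl this, Finset.sum_ite_eq' s j₀ g]
    simp [hj₀s]
  have hsup : Finsupp.single i j₀ ∈ p.support := by
    rw [MvPolynomial.mem_support_iff, hcoeff]; exact hj₀
  have hmono : monomial (Finsupp.single i j₀) (1 : k) ∈ I :=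
    monomial_mem_of_mem hpI hsup
  rw [← hX j₀] at hmono
  refine ⟨j₀, ?_, hmono⟩
  by_contra h
  push_neg at h
  interval_cases j₀
  have : (1 : MvPolynomial (Fin n) k) ∈ I := by simpa using hmono
  have := (mem_spanX_iff (1 : MvPolynomial (Fin n) k)).mp (hIm this)
  simp at this

end Aux

set_option maxHeartbeats 2000000 in
/-- For `M = R/I` with `I ⊆ m = ⟨x₁,…,xₙ⟩` a monomial ideal and `dim_k R/I < ∞`:
the submodule generated by the envelope of `0`,
`E_M(0) = {r•m : ∃ t ≥ 1, rᵗ•m = 0}`, equals `m·M`; it also equals the prime radical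
`β(M)` (the intersection of all prime submodules) and the Jacobson radical `J(M)`
(the intersection of all maximal submodules). Hence `0` satisfies the radical formula. -/
theorem envelope_eq_radicals {k : Type*} [Field k] [CharZero k] {n : ℕ}
    (I : Ideal (MvPolynomial (Fin n) k)) (hI : IsMonomialIdeal I)
    (hIm : I ≤ Ideal.span (Set.range X))
    [FiniteDimensional k (MvPolynomial (Fin n) k ⧸ I)] :
    Submodule.span (MvPolynomial (Fin n) k)
        {x : MvPolynomial (Fin n) k ⧸ I |
          ∃ (r : MvPolynomial (Fin n) k) (m : MvPolynomial (Fin n) k ⧸ I),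
            x = r • m ∧ ∃ t : ℕ, 1 ≤ t ∧ r ^ t • m = 0} =
      (Ideal.span (Set.range X) : Ideal (MvPolynomial (Fin n) k)) •
        (⊤ : Submodule (MvPolynomial (Fin n) k) (MvPolynomial (Fin n) k ⧸ I)) ∧
    Submodule.span (MvPolynomial (Fin n) k)
        {x : MvPolynomial (Fin n) k ⧸ I |
          ∃ (r : MvPolynomial (Fin n) k) (m : MvPolynomial (Fin n) k ⧸ I),
            x = r • m ∧ ∃ t : ℕ, 1 ≤ t ∧ r ^ t • m = 0} =
      sInf {P : Submodule (MvPolynomial (Fin n) k) (MvPolynomial (Fin n) k ⧸ I) |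
          P ≠ ⊤ ∧ ∀ (a : MvPolynomial (Fin n) k) (m : MvPolynomial (Fin n) k ⧸ I),
            a • m ∈ P → m ∈ P ∨ ∀ x : MvPolynomial (Fin n) k ⧸ I, a • x ∈ P} ∧
    Submodule.span (MvPolynomial (Fin n) k)
        {x : MvPolynomial (Fin n) k ⧸ I |
          ∃ (r : MvPolynomial (Fin n) k) (m : MvPolynomial (Fin n) k ⧸ I),
            x = r • m ∧ ∃ t : ℕ, 1 ≤ t ∧ r ^ t • m = 0} =
      sInf {N : Submodule (MvPolynomial (Fin n) k) (MvPolynomial (Fin n) k ⧸ I) |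
          IsCoatom N} := by
  set R := MvPolynomial (Fin n) k
  set A := MvPolynomial (Fin n) k ⧸ I
  set mI : Ideal R := Ideal.span (Set.range X) with hmIdef
  set mk : R → A := ⇑(Ideal.Quotient.mk I) with hmkdef
  set mM : Submodule R A := mI • (⊤ : Submodule R A) with hmMdef
  have hsmul : ∀ (r x : R), r • (mk x) = mk (r * x) := fun r x => rfl
  have hmksurj : Function.Surjective mk := Ideal.Quotient.mk_surjective
  -- mM = image of mI
  have hmap : mM = Submodule.map (Submodule.mkQ (I : Submodule R R)) mI := by
    have h1 := Submodule.map_smul'' mI (⊤ : Submodule R R)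
      (Submodule.mkQ (I : Submodule R R))
    rw [Submodule.map_top, Submodule.range_mkQ, smul_eq_mul, Ideal.mul_top] at h1
    exact h1.symm
  have hmkQ : ∀ x : R, Submodule.mkQ (I : Submodule R R) x = mk x := fun x => rfl
  have hmem_mM : ∀ p : R, mk p ∈ mM ↔ p ∈ mI := by
    intro p
    constructor
    · intro hp
      rw [hmap] at hp
      obtain ⟨q, hq, hqe⟩ := hp
      rw [hmkQ] at hqe
      have hsub : p - q ∈ I := by
        rw [← Ideal.Quotient.mk_eq_mk_iff_sub_mem]
        exact hqe.symm
      have : p = (p - q) + q := by ring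
      rw [this]
      exact Ideal.add_mem _ (hIm hsub) hq
    · intro hp
      rw [hmap]
      exact ⟨p, hp, rfl⟩
  -- each X i nilpotent mod I
  have hpow := exists_pow_X_mem I hI hIm
  have hnil : ∀ p ∈ mI, IsNilpotent (mk p) := by
    intro p hp
    refine Submodule.span_induction ?_ ?_ ?_ ?_ hp
    · rintro x ⟨i, rfl⟩
      obtain ⟨d, _, hd⟩ := hpow i
      exact ⟨d, by rw [← map_pow]; exact Ideal.Quotient.eq_zero_iff_mem.mpr hd⟩
    · exact ⟨1, by simp [hmkdef]⟩
    · intro a b _ _ ha hb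
      rw [show mk (a + b) = mk a + mk b from map_add (Ideal.Quotient.mk I) a b]
      exact Commute.isNilpotent_add (Commute.all _ _) ha hb
    · intro r a _ ha
      rw [smul_eq_mul, show mk (r * a) = mk r * mk a from map_mul (Ideal.Quotient.mk I) r a]
      obtain ⟨d, hd⟩ := ha
      exact ⟨d, by rw [mul_pow, hd, mul_zero]⟩
  -- units
  have hunit : ∀ r : R, constantCoeff r ≠ 0 → IsUnit (mk r) := by
    intro r hc
    have h1 : IsUnit (mk (C (constantCoeff r))) := by
      refine isUnit_iff_exists_inv.mpr ⟨mk (C (constantCoeff r)⁻¹), ?_⟩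
      rw [show mk (C (constantCoeff r)) * mk (C (constantCoeff r)⁻¹)
          = mk (C (constantCoeff r) * C (constantCoeff r)⁻¹) from
        (map_mul (Ideal.Quotient.mk I) _ _).symm]
      rw [← C_mul, mul_inv_cancel₀ hc]
      simp [hmkdef]
    have h2 : IsNilpotent (mk (r - C (constantCoeff r))) :=
      hnil _ (sub_C_mem_spanX r)
    have := h2.isUnit_add_left_of_commute h1 (Commute.all _ _)
    rw [show mk (C (constantCoeff r)) + mk (r - C (constantCoeff r)) = mk r by
      rw [← map_add]; congr 1; ring] at this
    exact this
  -- Part 1 : E = mM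
  have hE : Submodule.span R
      {x : A | ∃ (r : R) (m : A), x = r • m ∧ ∃ t : ℕ, 1 ≤ t ∧ r ^ t • m = 0} = mM := by
    apply le_antisymm
    · rw [Submodule.span_le]
      rintro x ⟨r, m, rfl, t, ht, hrt⟩
      obtain ⟨q, rfl⟩ := hmksurj m
      by_cases hc : constantCoeff r = 0
      · rw [hsmul]
        exact (hmem_mM _).mpr (Ideal.mul_mem_right _ _ ((mem_spanX_iff r).mpr hc))
      · have hu : IsUnit ((mk r) ^ t) := (hunit r hc).pow t
        have h0 : (mk r) ^ t * mk q = 0 := by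
          rw [hsmul] at hrt
          rw [hmkdef] at hrt ⊢
          rw [← map_pow, ← map_mul]
          exact hrt
        have hq0 : mk q = 0 := by
          obtain ⟨u, hu'⟩ := hu
          have := congrArg (fun y => (↑u⁻¹ : A) * y) h0
          simp only [mul_zero] at this
          rwa [← mul_assoc, ← hu', Units.inv_mul, one_mul] at this
        rw [hsmul, show mk (r * q) = mk r * mk q from map_mul (Ideal.Quotient.mk I) r q,
          hq0, mul_zero]
        exact Submodule.zero_mem _
    · rw [hmMdef]
      refine Submodule.smul_le.mpr ?_
      intro r hr m _
      have key : ∀ r ∈ mI, ∀ m : A, r • m ∈ Submodule.span R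
          {x : A | ∃ (r : R) (m : A), x = r • m ∧ ∃ t : ℕ, 1 ≤ t ∧ r ^ t • m = 0} := by
        intro r hr
        refine Submodule.span_induction ?_ ?_ ?_ ?_ hr
        · rintro x ⟨i, rfl⟩ m
          obtain ⟨d, hd1, hd⟩ := hpow i
          refine Submodule.subset_span ⟨X i, m, rfl, d, hd1, ?_⟩
          obtain ⟨q, rfl⟩ := hmksurj m
          rw [hsmul]
          exact Ideal.Quotient.eq_zero_iff_mem.mpr (Ideal.mul_mem_right _ _ hd)
        · intro m; rw [zero_smul]; exact Submodule.zero_mem _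
        · intro a b _ _ ha hb m
          rw [add_smul]; exact Submodule.add_mem _ (ha m) (hb m)
        · intro s a _ ha m
          rw [smul_eq_mul, mul_smul]
          exact Submodule.smul_mem _ s (ha m)
      exact key r hr m
  -- mM is in the prime set
  have hone : (1 : R) ∉ mI := fun h => by
    have := (mem_spanX_iff 1).mp h; simp at this
  have hmM_ne_top : mM ≠ ⊤ := by
    intro h
    exact hone ((hmem_mM 1).mp (h ▸ Submodule.mem_top))
  have hmM_prime : mM ∈ {P : Submodule R A |
      P ≠ ⊤ ∧ ∀ (a : R) (m : A), a • m ∈ P → m ∈ P ∨ ∀ x : A, a • x ∈ P} := by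
    refine ⟨hmM_ne_top, ?_⟩
    intro a m ham
    by_cases hc : constantCoeff a = 0
    · right
      intro x
      obtain ⟨q, rfl⟩ := hmksurj x
      rw [hsmul]
      exact (hmem_mM _).mpr (Ideal.mul_mem_right _ _ ((mem_spanX_iff a).mpr hc))
    · left
      obtain ⟨q, rfl⟩ := hmksurj m
      rw [hsmul] at ham
      have haq : a * q ∈ mI := (hmem_mM _).mp ham
      have h0 : constantCoeff (a * q) = 0 := (mem_spanX_iff _).mp haq
      rw [map_mul] at h0
      have : constantCoeff q = 0 := by
        rcases mul_eq_zero.mp h0 with h | h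
        · exact absurd h hc
        · exact h
      exact (hmem_mM q).mpr ((mem_spanX_iff q).mpr this)
  -- every prime submodule contains mM
  have hprime_le : ∀ P ∈ {P : Submodule R A |
      P ≠ ⊤ ∧ ∀ (a : R) (m : A), a • m ∈ P → m ∈ P ∨ ∀ x : A, a • x ∈ P}, mM ≤ P := by
    rintro P ⟨hPt, hPp⟩
    have ppow : ∀ (j : ℕ) (a : R) (x : A), a ^ j • x ∈ P → a • x ∈ P := by
      intro j
      induction j with
      | zero => intro a x hx; rw [pow_zero, one_smul] at hx; exact P.smul_mem a hx
      | succ j ih =>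
          intro a x hx
          rw [pow_succ, mul_comm, mul_smul] at hx
          rcases hPp a _ hx with h | h
          · exact ih a x h
          · exact h x
    rw [hmMdef]
    refine Submodule.smul_le.mpr ?_
    intro r hr m _
    have key : ∀ r ∈ mI, ∀ m : A, r • m ∈ P := by
      intro r hr
      refine Submodule.span_induction ?_ ?_ ?_ ?_ hr
      · rintro x ⟨i, rfl⟩ m
        obtain ⟨d, _, hd⟩ := hpow i
        refine ppow d (X i) m ?_
        obtain ⟨q, rfl⟩ := hmksurj m
        rw [hsmul]
        have : X i ^ d * q ∈ I := Ideal.mul_mem_right _ _ hd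
        rw [show mk (X i ^ d * q) = 0 from Ideal.Quotient.eq_zero_iff_mem.mpr this]
        exact P.zero_mem
      · intro m; rw [zero_smul]; exact P.zero_mem
      · intro a b _ _ ha hb m; rw [add_smul]; exact P.add_mem (ha m) (hb m)
      · intro s a _ ha m
        rw [smul_eq_mul, mul_smul]
        exact P.smul_mem s (ha m)
    exact key r hr m
  -- mM is a coatom
  have hmM_coatom : IsCoatom mM := by
    constructor
    · exact hmM_ne_top
    · intro N hN
      obtain ⟨y, hyN, hymM⟩ := SetLike.exists_of_lt hN
      obtain ⟨p, rfl⟩ := hmksurj y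
      have hpm : p ∉ mI := fun h => hymM ((hmem_mM p).mpr h)
      have hc : constantCoeff p ≠ 0 := fun h => hpm ((mem_spanX_iff p).mpr h)
      have hsub : mk (p - C (constantCoeff p)) ∈ N :=
        hN.le ((hmem_mM _).mpr (sub_C_mem_spanX p))
      have hCc : mk (C (constantCoeff p)) ∈ N := by
        have : mk (C (constantCoeff p)) = mk p - mk (p - C (constantCoeff p)) := by
          rw [← map_sub]; congr 1; ring
        rw [this]
        exact N.sub_mem hyN hsub
      rw [eq_top_iff]
      intro x _
      obtain ⟨q, rfl⟩ := hmksurj x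
      have : (q * C (constantCoeff p)⁻¹) • mk (C (constantCoeff p)) = mk q := by
        rw [hsmul]
        congr 1
        rw [mul_assoc, ← C_mul, inv_mul_cancel₀ hc, C_1, mul_one]
      rw [← this]
      exact N.smul_mem _ hCc
  -- coatoms are prime
  have hcoatom_prime : ∀ N : Submodule R A, IsCoatom N → N ∈ {P : Submodule R A |
      P ≠ ⊤ ∧ ∀ (a : R) (m : A), a • m ∈ P → m ∈ P ∨ ∀ x : A, a • x ∈ P} := by
    intro N hN
    refine ⟨hN.1, ?_⟩
    intro a m ham
    by_cases hm : m ∈ N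
    · exact Or.inl hm
    · right
      have htop : N ⊔ Submodule.span R {m} = ⊤ := by
        refine hN.2 _ (lt_of_le_of_ne le_sup_left ?_)
        intro h
        exact hm (h ▸ Submodule.mem_sup_right (Submodule.mem_span_singleton_self m))
      intro x
      have hx : x ∈ N ⊔ Submodule.span R {m} := htop ▸ Submodule.mem_top
      obtain ⟨u, hu, v, hv, rfl⟩ := Submodule.mem_sup.mp hx
      obtain ⟨s, rfl⟩ := Submodule.mem_span_singleton.mp hv
      rw [smul_add]
      refine N.add_mem (N.smul_mem a hu) ?_
      rw [smul_comm]
      exact N.smul_mem s ham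
  refine ⟨hE, ?_, ?_⟩
  · rw [hE]
    apply le_antisymm
    · exact le_sInf hprime_le
    · exact sInf_le hmM_prime
  · rw [hE]
    apply le_antisymm
    · exact le_sInf fun N hN => hprime_le N (hcoatom_prime N hN)
    · exact sInf_le hmM_coatom
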